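/- In Algorithm 1 (virtual particle stochastic approximation), for every 0 ≤ k ≤ T, conditioned on the σ-algebra R_{k-1}, the random vectors X_k^{(1)},…,X_k^{(n)}, Y_k^{(k)}, Y_k^{(k+1)},…,Y_k^{(T)} are i.i.d.; in particular, conditioned on R_{T-1}, the outputs X_T^{(1)},…,X_T^{(n)} are i.i.d. with common conditional law μ_T|R_{T-1}. -/

import Mathlib

open MeasureTheory ProbabilityTheory
open scoped ENNReal NNReal RealInnerProductSpace

noncomputable section

/-- `ℝᵈ` with the Euclidean norm. -/
abbrev EucSp (d : ℕ) := EuclideanSpace ℝ (Fin d)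

/-- Real inner product on `ℝᵈ`. -/
def iprod {d : ℕ} (a b : EucSp d) : ℝ := inner ℝ a b

/-- Squared 2-Wasserstein distance: infimum over couplings of `∫ ‖x - y‖²`. -/
def W2sq {d : ℕ} (μ ν : Measure (EucSp d)) : ℝ :=
  sInf {r : ℝ | ∃ γ : Measure (EucSp d × EucSp d),
    γ.map Prod.fst = μ ∧ γ.map Prod.snd = ν ∧ r = ∫ p, ‖p.1 - p.2‖ ^ 2 ∂γ}

/-- 2-Wasserstein distance. -/
def W2 {d : ℕ} (μ ν : Measure (EucSp d)) : ℝ := Real.sqrt (W2sq μ ν)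

/-- `μ ∈ 𝒫₂(ℝᵈ)`: Borel probability measure with finite second moment. -/
def MemP2 {d : ℕ} (μ : Measure (EucSp d)) : Prop :=
  IsProbabilityMeasure μ ∧ Integrable (fun x => ‖x‖ ^ 2) μ

/-- `μ ∈ 𝒫_{2,ac}(ℝᵈ)`: additionally absolutely continuous w.r.t. Lebesgue measure. -/
def MemP2ac {d : ℕ} (μ : Measure (EucSp d)) : Prop :=
  MemP2 μ ∧ μ ≪ (volume : Measure (EucSp d))

/-- Mean vector of a measure. -/
def meanOf {d : ℕ} (μ : Measure (EucSp d)) : EucSp d := ∫ x, x ∂μ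

/-- `Var(μ)`: trace of the covariance matrix of `μ`. -/
def varOf {d : ℕ} (μ : Measure (EucSp d)) : ℝ := ∫ x, ‖x - meanOf μ‖ ^ 2 ∂μ

/-- Kullback–Leibler divergence `KL(μ‖π) = ∫ log (dμ/dπ) dμ`. -/
def KLdiv {d : ℕ} (μ π : Measure (EucSp d)) : ℝ :=
  ∫ x, Real.log ((μ.rnDeriv π x).toReal) ∂μ

/-- Fisher divergence `FD(μ‖π) = ∫ ‖∇ log (dμ/dπ)‖² dμ`. -/
def FDiv {d : ℕ} (μ π : Measure (EucSp d)) : ℝ :=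
  ∫ x, ‖gradient (fun y => Real.log ((μ.rnDeriv π y).toReal)) x‖ ^ 2 ∂μ

/-- `π` satisfies a logarithmic Sobolev inequality with constant `C`. -/
def SatisfiesLSI {d : ℕ} (π : Measure (EucSp d)) (C : ℝ) : Prop :=
  ∀ μ : Measure (EucSp d), MemP2ac μ → μ ≪ π → KLdiv μ π ≤ C / 2 * FDiv μ π

/-- The Gaussian measure `N(0, v·I_d)` on `ℝᵈ`. -/
def stdGaussianE (d : ℕ) (v : ℝ) : Measure (EucSp d) :=
  (Measure.pi fun _ : Fin d => gaussianReal 0 v.toNNReal).map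
    (MeasurableEquiv.toLp 2 (Fin d → ℝ))

/-- Gradient of the log-density (w.r.t. Lebesgue measure) of a measure. -/
def gradLogDens {d : ℕ} (μ : Measure (EucSp d)) (x : EucSp d) : EucSp d :=
  gradient (fun y => Real.log ((μ.rnDeriv (volume : Measure (EucSp d)) y).toReal)) x

/-- The Wasserstein gradient `∇_W 𝓔̄(x, μ) = V̄(x,μ) + (σ²/2) ∇ log μ(x)` of the functional
`𝓔̄ = 𝓕̄ + (σ²/2)𝓗`, where `V̄ = ∇_W 𝓕̄`. -/
def WGradE {d : ℕ} (Vbar : EucSp d → Measure (EucSp d) → EucSp d) (σ : ℝ)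
    (x : EucSp d) (μ : Measure (EucSp d)) : EucSp d :=
  Vbar x μ + (σ ^ 2 / 2) • gradLogDens μ x

/-- `B` is a standard `ℝᵈ`-valued Brownian motion on `(Ω, P)`. -/
def IsStdBrownian {Ω : Type*} [MeasurableSpace Ω] {d : ℕ} (B : ℝ → Ω → EucSp d)
    (P : Measure Ω) : Prop :=
  (∀ᵐ ω ∂P, B 0 ω = 0) ∧
  (∀ᵐ ω ∂P, Continuous fun t => B t ω) ∧
  (∀ s t : ℝ, 0 ≤ s → s ≤ t →
    P.map (fun ω => B t ω - B s ω) = stdGaussianE d (t - s)) ∧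
  (∀ s t : ℝ, 0 ≤ s → s ≤ t →
    IndepFun (fun ω => B t ω - B s ω) (fun ω (r : Set.Icc (0:ℝ) s) => B (r : ℝ) ω) P)

/-- Index type enumerating all the independent random draws of Algorithm 1. -/
inductive AlgIdx : Type where
  | x0 : ℕ → AlgIdx
  | y0 : ℕ → AlgIdx
  | xi : ℕ → AlgIdx
  | z : ℕ → ℕ → AlgIdx
  | w : ℕ → ℕ → AlgIdx

/-- Value space of each random draw of Algorithm 1. -/
def algType (d m : ℕ) : AlgIdx → Type
  | .x0 _ => EucSp d
  | .y0 _ => EucSp d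
  | .xi _ => EucSp m
  | .z _ _ => EucSp d
  | .w _ _ => EucSp d

/-- Measurable structure on the value spaces. -/
def algMS (d m : ℕ) : ∀ i : AlgIdx, MeasurableSpace (algType d m i)
  | .x0 _ => inferInstanceAs (MeasurableSpace (EucSp d))
  | .y0 _ => inferInstanceAs (MeasurableSpace (EucSp d))
  | .xi _ => inferInstanceAs (MeasurableSpace (EucSp m))
  | .z _ _ => inferInstanceAs (MeasurableSpace (EucSp d))
  | .w _ _ => inferInstanceAs (MeasurableSpace (EucSp d))

/-- The family of all random draws of Algorithm 1, as a single indexed family. -/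
def algFam {Ω : Type*} {d m : ℕ} (X0 Y0 : ℕ → Ω → EucSp d) (Ξ : ℕ → Ω → EucSp m)
    (Z W : ℕ → ℕ → Ω → EucSp d) : ∀ i : AlgIdx, Ω → algType d m i
  | .x0 i => X0 i
  | .y0 j => Y0 j
  | .xi k => Ξ k
  | .z k i => Z k i
  | .w k j => W k j

/-- The virtual particles `Y_k^{(j)}` of Algorithm 1:
`Y_{k+1}^{(j)} = Y_k^{(j)} + η Ĝ(Y_k^{(j)}, Y_k^{(k)}, ξ_k) + σ√η W_k^{(j)}`. -/
def Yalg {Ω : Type*} {d m : ℕ} (η σ : ℝ) (G : EucSp d → EucSp d → EucSp m → EucSp d)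
    (Y0 : ℕ → Ω → EucSp d) (Ξ : ℕ → Ω → EucSp m) (W : ℕ → ℕ → Ω → EucSp d) :
    ℕ → ℕ → Ω → EucSp d
  | 0, j => Y0 j
  | (k+1), j => fun ω =>
      Yalg η σ G Y0 Ξ W k j ω
        + η • G (Yalg η σ G Y0 Ξ W k j ω) (Yalg η σ G Y0 Ξ W k k ω) (Ξ k ω)
        + (σ * Real.sqrt η) • W k j ω

/-- The real particles `X_k^{(i)}` of Algorithm 1:
`X_{k+1}^{(i)} = X_k^{(i)} + η Ĝ(X_k^{(i)}, Y_k^{(k)}, ξ_k) + σ√η Z_k^{(i)}`. -/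
def Xalg {Ω : Type*} {d m : ℕ} (η σ : ℝ) (G : EucSp d → EucSp d → EucSp m → EucSp d)
    (X0 Y0 : ℕ → Ω → EucSp d) (Ξ : ℕ → Ω → EucSp m) (Z W : ℕ → ℕ → Ω → EucSp d) :
    ℕ → ℕ → Ω → EucSp d
  | 0, i => X0 i
  | (k+1), i => fun ω =>
      Xalg η σ G X0 Y0 Ξ Z W k i ω
        + η • G (Xalg η σ G X0 Y0 Ξ Z W k i ω) (Yalg η σ G Y0 Ξ W k k ω) (Ξ k ω)
        + (σ * Real.sqrt η) • Z k i ω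

/-- The random variables `(Y_0^{(0)},…,Y_{k-1}^{(k-1)}, ξ_0,…,ξ_{k-1})` generating the σ-algebra
`R_{k-1}`; conditioning on `R_{k-1}` is conditioning on this map. -/
def Rvar {Ω : Type*} {d m : ℕ} (η σ : ℝ) (G : EucSp d → EucSp d → EucSp m → EucSp d)
    (Y0 : ℕ → Ω → EucSp d) (Ξ : ℕ → Ω → EucSp m) (W : ℕ → ℕ → Ω → EucSp d) (k : ℕ) :
    Ω → (Fin k → EucSp d) × (Fin k → EucSp m) :=
  fun ω => (fun j => Yalg η σ G Y0 Ξ W j j ω, fun j => Ξ j ω)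


namespace Helpers

variable {Ω ι κ' : Type*} {mΩ : MeasurableSpace Ω} {P : Measure Ω}

/-- Grouping lemma: independent blocks generate independent σ-algebras. -/
lemma iIndep_sup_blocks {γ : ι → Type*} {mγ : ∀ i, MeasurableSpace (γ i)}
    {f : ∀ i, Ω → γ i} [IsProbabilityMeasure P]
    (hf : iIndepFun (m := mγ) f P) (hmf : ∀ i, Measurable (f i))
    (J : κ' → Finset ι) (hJ : Pairwise (Function.onFun Disjoint J)) :
    iIndep (fun b => ⨆ i ∈ J b, MeasurableSpace.comap (f i) (mγ i)) P := by
  classical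
  refine iIndepSets.iIndep (fun b => ?_) 
    (fun b => piiUnionInter (fun i => {s | MeasurableSet[(mγ i).comap (f i)] s}) (J b))
    (fun b => isPiSystem_piiUnionInter _
      (fun i => @MeasurableSpace.isPiSystem_measurableSet Ω ((mγ i).comap (f i))) _)
    (fun b => (generateFrom_piiUnionInter_measurableSet _ _).symm) ?_
  · exact iSup₂_le fun i _ => (hmf i).comap_le
  · rw [iIndepSets_iff]
    intro s f' hf'
    choose! t htJ g hgmem heq using hf'
    -- t b ⊆ J b for b ∈ s (as sets), g b i measurable for i ∈ t b, f' b = ⋂ i ∈ t b, g b i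
    have hdisj : ∀ b ∈ s, ∀ b' ∈ s, b ≠ b' → Disjoint (t b) (t b') := by
      intro b hb b' hb' hne
      exact Finset.disjoint_coe.mp <| Set.disjoint_of_subset (htJ b hb) (htJ b' hb')
        (Finset.disjoint_coe.mpr (hJ hne))
    set Gs : ι → Set Ω := fun i => ⋂ b ∈ s.filter (fun b => i ∈ t b), g b i with hGs
    have key : ∀ b ∈ s, ∀ i ∈ t b, Gs i = g b i := by
      intro b hb i hi
      have : s.filter (fun b => i ∈ t b) = {b} := by
        ext b'
        simp only [Finset.mem_filter, Finset.mem_singleton]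
        constructor
        · rintro ⟨hb', hi'⟩
          by_contra hne
          exact (Finset.disjoint_left.mp (hdisj b' hb' b hb hne) hi') hi
        · rintro rfl; exact ⟨hb, hi⟩
      rw [hGs]; simp only [this, Finset.set_biInter_singleton]
    have hinter : (⋂ b ∈ s, f' b) = ⋂ i ∈ s.biUnion t, Gs i := by
      rw [Finset.set_biInter_biUnion]
      refine Set.iInter₂_congr fun b hb => ?_
      rw [heq b hb]
      exact (Set.iInter₂_congr fun i hi => (key b hb i hi).symm)
    have hGmeas : ∀ i ∈ s.biUnion t, MeasurableSet[(mγ i).comap (f i)] (Gs i) := by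
      intro i hi
      obtain ⟨b, hb, hib⟩ := Finset.mem_biUnion.mp hi
      rw [key b hb i hib]; exact hgmem b hb i hib
    rw [hinter, hf.iIndep.meas_biInter hGmeas, Finset.prod_biUnion hdisj]
    refine Finset.prod_congr rfl fun b hb => ?_
    rw [Finset.prod_congr rfl (fun i hi => by rw [key b hb i hi] :
      ∀ i ∈ t b, P (Gs i) = P (g b i)),
      ← hf.iIndep.meas_biInter (fun i hi => hgmem b hb i hi), ← heq b hb]

/-- Functions measurable w.r.t. independent block σ-algebras are independent. -/
lemma iIndepFun_blocks {γ : ι → Type*} {mγ : ∀ i, MeasurableSpace (γ i)}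
    {f : ∀ i, Ω → γ i} [IsProbabilityMeasure P]
    (hf : iIndepFun (m := mγ) f P) (hmf : ∀ i, Measurable (f i))
    (J : κ' → Finset ι) (hJ : Pairwise (Function.onFun Disjoint J))
    {δ : κ' → Type*} (mδ : ∀ b, MeasurableSpace (δ b)) (h : ∀ b, Ω → δ b)
    (hh : ∀ b, Measurable[⨆ i ∈ J b, MeasurableSpace.comap (f i) (mγ i)] (h b)) :
    iIndepFun (m := mδ) h P := by
  have hsup := iIndep_sup_blocks hf hmf J hJ
  rw [iIndepFun_iff_iIndep]
  rw [iIndep_iff] at hsup ⊢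
  intro s E hE
  exact hsup s (fun b hb => (hh b).comap_le _ (hE b hb))

end Helpers

namespace Helpers

variable {Ω : Type*} {mΩ : MeasurableSpace Ω} {P : Measure Ω}

/-- The joint law of finitely many independent random variables is the product measure. -/
lemma map_fun_pi {ι : Type*} [Fintype ι] {γ : ι → Type*} [∀ i, MeasurableSpace (γ i)]
    {f : ∀ i, Ω → γ i} [IsProbabilityMeasure P]
    (hm : ∀ i, Measurable (f i)) (hf : iIndepFun f P) :
    P.map (fun ω i => f i ω) = Measure.pi (fun i => P.map (f i)) := by
  have hpm : ∀ i, IsProbabilityMeasure (P.map (f i)) :=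
    fun i => Measure.isProbabilityMeasure_map (hm i).aemeasurable
  refine (Measure.pi_eq fun s hs => ?_).symm
  rw [Measure.map_apply (measurable_pi_lambda _ hm) (MeasurableSet.univ_pi hs)]
  have hpre : (fun ω i => f i ω) ⁻¹' (Set.univ.pi s) = ⋂ i, f i ⁻¹' s i := by
    ext ω; simp [Set.mem_pi]
  rw [hpre, hf.meas_iInter (fun i => ⟨s i, hs i, rfl⟩)]
  exact Finset.prod_congr rfl fun i _ => (Measure.map_apply (hm i) (hs i)).symm

/-- Componentwise pushforward of a product of probability measures. -/
lemma pi_map_comp {ι : Type*} [Fintype ι] {α β : ι → Type*} [∀ i, MeasurableSpace (α i)]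
    [∀ i, MeasurableSpace (β i)] (μ : ∀ i, Measure (α i)) [∀ i, IsProbabilityMeasure (μ i)]
    (g : ∀ i, α i → β i) (hg : ∀ i, Measurable (g i)) :
    (Measure.pi μ).map (fun x i => g i (x i)) = Measure.pi (fun i => (μ i).map (g i)) := by
  have : ∀ i, IsProbabilityMeasure ((μ i).map (g i)) :=
    fun i => Measure.isProbabilityMeasure_map (hg i).aemeasurable
  refine (Measure.pi_eq fun s hs => ?_).symm
  rw [Measure.map_apply (show Measurable fun (x : ∀ i, α i) i => g i (x i) from
    measurable_pi_lambda _ fun i => (hg i).comp (measurable_pi_apply i))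
    (MeasurableSet.univ_pi hs)]
  have hpre : (fun x i => g i (x i)) ⁻¹' (Set.univ.pi s) = Set.univ.pi fun i => g i ⁻¹' s i := by
    ext x; simp [Set.mem_pi]
  rw [hpre, Measure.pi_pi]
  exact Finset.prod_congr rfl fun i _ => (Measure.map_apply (hg i) (hs i)).symm

/-- A composition-product against a "push a fixed measure through a parametrized map" kernel. -/
lemma compProd_eq_map_prod {β α δ : Type*} [MeasurableSpace β] [MeasurableSpace α]
    [MeasurableSpace δ] (μ : Measure β) [SFinite μ] (ν : Measure α) [SFinite ν]
    (g : β × α → δ) (hg : Measurable g) (κ : Kernel β δ) [IsSFiniteKernel κ]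
    (hκ : ∀ b, κ b = ν.map (fun a => g (b, a))) :
    μ ⊗ₘ κ = (μ.prod ν).map (fun p => (p.1, g p)) := by
  ext s hs
  rw [Measure.compProd_apply hs, Measure.map_apply (measurable_fst.prodMk hg) hs,
    Measure.prod_apply ((measurable_fst.prodMk hg) hs)]
  refine lintegral_congr fun b => ?_
  rw [hκ b, Measure.map_apply (show Measurable fun a => g (b, a) from
    hg.comp measurable_prodMk_left) (measurable_prodMk_left hs)]
  rfl

end Helpers

namespace Helpers

/-- Abstract conditional-i.i.d. lemma. -/
lemma condDistrib_pi_of_indep {Ω β α δ : Type*} [MeasurableSpace Ω] (P : Measure Ω)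
    [IsProbabilityMeasure P] [MeasurableSpace β] [MeasurableSpace α] [MeasurableSpace δ]
    [StandardBorelSpace δ] [Nonempty δ] {ι' : Type*} [Fintype ι']
    (R : Ω → β) (hR : Measurable R)
    (seed : ι' → Ω → α) (hseed : ∀ a, Measurable (seed a))
    (seed0 : Ω → α) (hseed0 : Measurable seed0)
    (μS : Measure α) [IsProbabilityMeasure μS]
    (F : β → α → δ) (hF : Measurable fun p : β × α => F p.1 p.2)
    (hjoint : P.map (fun ω => (R ω, fun a => seed a ω))
      = (P.map R).prod (Measure.pi fun _ : ι' => μS))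
    (hjoint0 : P.map (fun ω => (R ω, seed0 ω)) = (P.map R).prod μS) :
    ∀ᵐ ω ∂P,
      condDistrib (fun ω (a : ι') => F (R ω) (seed a ω)) R P (R ω)
        = Measure.pi (fun _ : ι' => condDistrib (fun ω => F (R ω) (seed0 ω)) R P (R ω)) := by
  haveI : IsProbabilityMeasure (P.map R) := Measure.isProbabilityMeasure_map hR.aemeasurable
  -- the single-seed kernel
  set κ0 : Kernel β δ :=
    Kernel.map ((Kernel.deterministic id measurable_id) ×ₖ Kernel.const β μS)
      (fun p : β × α => F p.1 p.2) with hκ0def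
  have hκ0 : ∀ b, κ0 b = μS.map (fun a => F b a) := by
    intro b
    rw [hκ0def, Kernel.map_apply _ hF, Kernel.prod_apply, Kernel.deterministic_apply,
      Kernel.const_apply, Measure.dirac_prod,
      Measure.map_map hF measurable_prodMk_left]
    rfl
  haveI : IsMarkovKernel κ0 := Kernel.IsMarkovKernel.map _ hF
  have hmV0 : Measurable fun ω => F (R ω) (seed0 ω) := hF.comp (hR.prodMk hseed0)
  have hcomp0 : P.map (fun ω => (R ω, F (R ω) (seed0 ω))) = P.map R ⊗ₘ κ0 := by
    have hre : (fun ω => (R ω, F (R ω) (seed0 ω)))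
        = (fun p : β × α => (p.1, F p.1 p.2)) ∘ (fun ω => (R ω, seed0 ω)) := rfl
    rw [hre, ← Measure.map_map (measurable_fst.prodMk hF) (hR.prodMk hseed0), hjoint0,
      compProd_eq_map_prod (P.map R) μS _ hF κ0 hκ0]
  have h0 := condDistrib_ae_eq_of_measure_eq_compProd_of_measurable hR hmV0 (κ := κ0) hcomp0
  -- the vector kernel
  set Φ : β × (ι' → α) → ι' → δ := fun p a => F p.1 (p.2 a) with hΦdef
  have hΦ : Measurable Φ := measurable_pi_lambda _ fun a =>
    hF.comp (measurable_fst.prodMk ((measurable_pi_apply a).comp measurable_snd))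
  set κn : Kernel β (ι' → δ) :=
    Kernel.map ((Kernel.deterministic id measurable_id)
      ×ₖ Kernel.const β (Measure.pi fun _ : ι' => μS)) Φ with hκndef
  have hκn : ∀ b, κn b = (Measure.pi fun _ : ι' => μS).map (fun s => Φ (b, s)) := by
    intro b
    rw [hκndef, Kernel.map_apply _ hΦ, Kernel.prod_apply, Kernel.deterministic_apply,
      Kernel.const_apply, Measure.dirac_prod, Measure.map_map hΦ measurable_prodMk_left]
    rfl
  haveI : IsMarkovKernel κn := Kernel.IsMarkovKernel.map _ hΦ
  have hseedvec : Measurable fun ω (a : ι') => seed a ω := measurable_pi_lambda _ hseed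
  have hmV : Measurable fun ω (a : ι') => F (R ω) (seed a ω) :=
    hΦ.comp (hR.prodMk hseedvec)
  have hcompn : P.map (fun ω => (R ω, fun a : ι' => F (R ω) (seed a ω))) = P.map R ⊗ₘ κn := by
    have hre : (fun ω => (R ω, fun a : ι' => F (R ω) (seed a ω)))
        = (fun p : β × (ι' → α) => (p.1, Φ p)) ∘ (fun ω => (R ω, fun a => seed a ω)) := rfl
    rw [hre, ← Measure.map_map (measurable_fst.prodMk hΦ) (hR.prodMk hseedvec), hjoint,
      compProd_eq_map_prod (P.map R) _ _ hΦ κn hκn]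
  have hn := condDistrib_ae_eq_of_measure_eq_compProd_of_measurable hR hmV (κ := κn) hcompn
  have hval : ∀ b, κn b = Measure.pi fun _ : ι' => κ0 b := by
    intro b
    rw [hκn b, hΦdef]
    have : (fun (s : ι' → α) => fun a => F b (s a))
        = fun (s : ι' → α) (a : ι') => (fun _ : ι' => F b) a (s a) := rfl
    rw [show (fun (s : ι' → α) (a : ι') => F b (s a))
        = (fun (s : ι' → α) (a : ι') => (fun _ : ι' => F b) a (s a)) from rfl,
      pi_map_comp (fun _ : ι' => μS) (fun _ => F b)
        (fun _ => hF.comp measurable_prodMk_left)]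
    refine congrArg _ (funext fun a => ?_)
    rw [hκ0 b]
  filter_upwards [ae_of_ae_map hR.aemeasurable h0, ae_of_ae_map hR.aemeasurable hn]
    with ω h1 h2
  rw [h2, hval (R ω), h1]

end Helpers
namespace Helpers
section Iter
variable {Ω : Type*} {d m : ℕ} (η σ : ℝ) (G : EucSp d → EucSp d → EucSp m → EucSp d)

/-- One-seed iteration map of Algorithm 1, with `ℕ`-indexed environments. -/
def stepF : ℕ → EucSp d × (ℕ → EucSp d) → (ℕ → EucSp d) × (ℕ → EucSp m) → EucSp d
  | 0, s, _ => s.1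
  | (k+1), s, r => stepF k s r + η • G (stepF k s r) (r.1 k) (r.2 k)
      + (σ * Real.sqrt η) • s.2 k

lemma stepF_congr (k : ℕ) (s s' : EucSp d × (ℕ → EucSp d))
    (r r' : (ℕ → EucSp d) × (ℕ → EucSp m)) (h1 : s.1 = s'.1)
    (h2 : ∀ l < k, s.2 l = s'.2 l) (h3 : ∀ l < k, r.1 l = r'.1 l)
    (h4 : ∀ l < k, r.2 l = r'.2 l) :
    stepF η σ G k s r = stepF η σ G k s' r' := by
  induction k with
  | zero => simp [stepF, h1]
  | succ k ih =>
    have hk : k < k + 1 := Nat.lt_succ_self k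
    simp only [stepF]
    rw [ih (fun l hl => h2 l (hl.trans hk)) (fun l hl => h3 l (hl.trans hk))
      (fun l hl => h4 l (hl.trans hk)), h3 k hk, h4 k hk, h2 k hk]

lemma stepF_measurable
    (hG : Measurable fun p : EucSp d × EucSp d × EucSp m => G p.1 p.2.1 p.2.2) (k : ℕ) :
    Measurable (fun q : (EucSp d × (ℕ → EucSp d)) × ((ℕ → EucSp d) × (ℕ → EucSp m)) =>
      stepF η σ G k q.1 q.2) := by
  induction k with
  | zero => exact measurable_fst.fst
  | succ k ih =>
    simp only [stepF]
    have h1 : Measurable fun q : (EucSp d × (ℕ → EucSp d)) × ((ℕ → EucSp d) × (ℕ → EucSp m)) =>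
        q.2.1 k := (measurable_pi_apply k).comp measurable_snd.fst
    have h2 : Measurable fun q : (EucSp d × (ℕ → EucSp d)) × ((ℕ → EucSp d) × (ℕ → EucSp m)) =>
        q.2.2 k := (measurable_pi_apply k).comp measurable_snd.snd
    have h3 : Measurable fun q : (EucSp d × (ℕ → EucSp d)) × ((ℕ → EucSp d) × (ℕ → EucSp m)) =>
        q.1.2 k := (measurable_pi_apply k).comp measurable_fst.snd
    exact ((ih.add ((hG.comp (ih.prodMk (h1.prodMk h2))).const_smul η)).add
      (h3.const_smul (σ * Real.sqrt η)))

/-- Extend a `Fin k`-tuple to a `ℕ`-indexed sequence by zero. -/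
def extFin {γ : Type*} [Zero γ] (k : ℕ) (v : Fin k → γ) : ℕ → γ :=
  fun l => if h : l < k then v ⟨l, h⟩ else 0

lemma measurable_extFin {γ : Type*} [Zero γ] [MeasurableSpace γ] (k : ℕ) :
    Measurable fun (v : Fin k → γ) => extFin k v := by
  refine measurable_pi_lambda _ fun l => ?_
  by_cases h : l < k
  · simpa [extFin, h] using measurable_pi_apply (⟨l, h⟩ : Fin k)
  · simpa [extFin, h] using measurable_const

/-- The map expressing `X_k^{(i)}` as a function of the conditioning variables and the seed. -/
def Fk (k : ℕ) (b : (Fin k → EucSp d) × (Fin k → EucSp m))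
    (s : EucSp d × (Fin k → EucSp d)) : EucSp d :=
  stepF η σ G k (s.1, extFin k s.2) (extFin k b.1, extFin k b.2)

lemma Fk_measurable
    (hG : Measurable fun p : EucSp d × EucSp d × EucSp m => G p.1 p.2.1 p.2.2) (k : ℕ) :
    Measurable fun p : ((Fin k → EucSp d) × (Fin k → EucSp m)) × (EucSp d × (Fin k → EucSp d)) =>
      Fk η σ G k p.1 p.2 := by
  refine (stepF_measurable η σ G hG k).comp (Measurable.prodMk ?_ ?_)
  · exact measurable_snd.fst.prodMk ((measurable_extFin k).comp measurable_snd.snd)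
  · exact ((measurable_extFin k).comp measurable_fst.fst).prodMk
      ((measurable_extFin k).comp measurable_fst.snd)

variable {X0 Y0 : ℕ → Ω → EucSp d} {Ξ : ℕ → Ω → EucSp m} {Z W : ℕ → ℕ → Ω → EucSp d}

lemma Yalg_eq_stepF (k j : ℕ) (hkj : k ≤ j) (ω : Ω) :
    Yalg η σ G Y0 Ξ W k j ω
      = stepF η σ G k (Y0 j ω, fun l => W l j ω)
          (fun l => Yalg η σ G Y0 Ξ W l l ω, fun l => Ξ l ω) := by
  induction k with
  | zero => rfl
  | succ k ih =>
    have hk : k ≤ j := (Nat.le_succ k).trans hkj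
    show Yalg η σ G Y0 Ξ W k j ω + _ + _ = _
    rw [ih hk]
    rfl

lemma Xalg_eq_stepF (k i : ℕ) (ω : Ω) :
    Xalg η σ G X0 Y0 Ξ Z W k i ω
      = stepF η σ G k (X0 i ω, fun l => Z l i ω)
          (fun l => Yalg η σ G Y0 Ξ W l l ω, fun l => Ξ l ω) := by
  induction k with
  | zero => rfl
  | succ k ih =>
    show Xalg η σ G X0 Y0 Ξ Z W k i ω + _ + _ = _
    rw [ih]
    rfl

lemma Xalg_rep (k i : ℕ) (ω : Ω) :
    Xalg η σ G X0 Y0 Ξ Z W k i ω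
      = Fk η σ G k (Rvar η σ G Y0 Ξ W k ω) (X0 i ω, fun l : Fin k => Z l i ω) := by
  rw [Xalg_eq_stepF]
  exact stepF_congr η σ G k _ _ _ _ rfl
    (fun l hl => by simp [extFin, hl]) (fun l hl => by simp [Rvar, extFin, hl])
    (fun l hl => by simp [Rvar, extFin, hl])

lemma Yalg_rep (k j : ℕ) (hkj : k ≤ j) (ω : Ω) :
    Yalg η σ G Y0 Ξ W k j ω
      = Fk η σ G k (Rvar η σ G Y0 Ξ W k ω) (Y0 j ω, fun l : Fin k => W l j ω) := by
  rw [Yalg_eq_stepF η σ G k j hkj]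
  exact stepF_congr η σ G k _ _ _ _ rfl
    (fun l hl => by simp [extFin, hl]) (fun l hl => by simp [Rvar, extFin, hl])
    (fun l hl => by simp [Rvar, extFin, hl])

lemma Yalg_measurable_of
    (hG : Measurable fun p : EucSp d × EucSp d × EucSp m => G p.1 p.2.1 p.2.2)
    (m0 : MeasurableSpace Ω) (k : ℕ)
    (hY0 : ∀ j < k, Measurable[m0] (Y0 j)) (hΞ : ∀ l < k, Measurable[m0] (Ξ l))
    (hW : ∀ l j, l < j → j < k → Measurable[m0] (W l j)) :
    ∀ l j, l ≤ j → j < k → Measurable[m0] (Yalg η σ G Y0 Ξ W l j) := by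
  intro l
  induction l with
  | zero => exact fun j _ hj => hY0 j hj
  | succ l ih =>
    intro j hlj hj
    have h1 := ih j (Nat.le_of_succ_le hlj) hj
    have hlk : l < k := lt_of_lt_of_le (Nat.lt_succ_self l) (le_trans hlj (le_of_lt hj))
    have h2 := ih l le_rfl hlk
    have hΞl := hΞ l hlk
    have hWl := hW l j hlj hj
    show Measurable[m0] fun ω =>
      Yalg η σ G Y0 Ξ W l j ω
        + η • G (Yalg η σ G Y0 Ξ W l j ω) (Yalg η σ G Y0 Ξ W l l ω) (Ξ l ω)
        + (σ * Real.sqrt η) • W l j ω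
    exact (h1.add ((hG.comp (h1.prodMk (h2.prodMk hΞl))).const_smul η)).add
      (hWl.const_smul (σ * Real.sqrt η))

lemma Rvar_measurable_of
    (hG : Measurable fun p : EucSp d × EucSp d × EucSp m => G p.1 p.2.1 p.2.2)
    (m0 : MeasurableSpace Ω) (k : ℕ)
    (hY0 : ∀ j < k, Measurable[m0] (Y0 j)) (hΞ : ∀ l < k, Measurable[m0] (Ξ l))
    (hW : ∀ l j, l < j → j < k → Measurable[m0] (W l j)) :
    Measurable[m0] (Rvar η σ G Y0 Ξ W k) := by
  have hdiag := Yalg_measurable_of η σ G hG m0 k hY0 hΞ hW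
  exact Measurable.prodMk
    (measurable_pi_lambda _ fun j => hdiag j j le_rfl j.2)
    (measurable_pi_lambda _ fun j => hΞ j j.2)
section CheckInst
example (d : ℕ) : StandardBorelSpace (EucSp d) := inferInstance
example (d k : ℕ) : StandardBorelSpace ((Fin k → EucSp d)) := inferInstance
end CheckInst
end Iter
end Helpers
namespace Helpers
open MeasurableSpace

noncomputable local instance : DecidableEq AlgIdx := Classical.decEq _

/-- Indices generating `R_{k-1}`. -/
def JR (k : ℕ) : Finset AlgIdx :=
  ((Finset.range k).image AlgIdx.y0) ∪ ((Finset.range k).image AlgIdx.xi)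
    ∪ ((Finset.range k ×ˢ Finset.range k).image fun p => AlgIdx.w p.1 p.2)

/-- Indices generating the seed of real particle `i`. -/
def JX (k i : ℕ) : Finset AlgIdx :=
  insert (AlgIdx.x0 i) ((Finset.range k).image fun l => AlgIdx.z l i)

/-- Indices generating the seed of virtual particle `j`. -/
def JY (k j : ℕ) : Finset AlgIdx :=
  insert (AlgIdx.y0 j) ((Finset.range k).image fun l => AlgIdx.w l j)

lemma mem_JR {k : ℕ} {a : AlgIdx} : a ∈ JR k ↔
    (∃ j < k, a = .y0 j) ∨ (∃ l < k, a = .xi l) ∨ (∃ l < k, ∃ j < k, a = .w l j) := by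
  simp only [JR, Finset.mem_union, Finset.mem_image, Finset.mem_range, Finset.mem_product]
  constructor
  · rintro ((⟨j, hj, rfl⟩ | ⟨l, hl, rfl⟩) | ⟨⟨l, j⟩, ⟨hl, hj⟩, rfl⟩)
    · exact Or.inl ⟨j, hj, rfl⟩
    · exact Or.inr (Or.inl ⟨l, hl, rfl⟩)
    · exact Or.inr (Or.inr ⟨l, hl, j, hj, rfl⟩)
  · rintro (⟨j, hj, rfl⟩ | ⟨l, hl, rfl⟩ | ⟨l, hl, j, hj, rfl⟩)
    · exact Or.inl (Or.inl ⟨j, hj, rfl⟩)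
    · exact Or.inl (Or.inr ⟨l, hl, rfl⟩)
    · exact Or.inr ⟨⟨l, j⟩, ⟨hl, hj⟩, rfl⟩

lemma mem_JX {k i : ℕ} {a : AlgIdx} : a ∈ JX k i ↔ a = .x0 i ∨ ∃ l < k, a = .z l i := by
  simp only [JX, Finset.mem_insert, Finset.mem_image, Finset.mem_range]
  constructor
  · rintro (rfl | ⟨l, hl, rfl⟩)
    exacts [Or.inl rfl, Or.inr ⟨l, hl, rfl⟩]
  · rintro (rfl | ⟨l, hl, rfl⟩)
    exacts [Or.inl rfl, Or.inr ⟨l, hl, rfl⟩]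

lemma mem_JY {k j : ℕ} {a : AlgIdx} : a ∈ JY k j ↔ a = .y0 j ∨ ∃ l < k, a = .w l j := by
  simp only [JY, Finset.mem_insert, Finset.mem_image, Finset.mem_range]
  constructor
  · rintro (rfl | ⟨l, hl, rfl⟩)
    exacts [Or.inl rfl, Or.inr ⟨l, hl, rfl⟩]
  · rintro (rfl | ⟨l, hl, rfl⟩)
    exacts [Or.inl rfl, Or.inr ⟨l, hl, rfl⟩]

lemma disjoint_JR_JX (k i : ℕ) : Disjoint (JR k) (JX k i) := by
  rw [Finset.disjoint_left]
  intro a ha ha'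
  rw [mem_JR] at ha; rw [mem_JX] at ha'
  rcases ha' with rfl | ⟨l, _, rfl⟩ <;>
    rcases ha with ⟨j', _, h⟩ | ⟨l', _, h⟩ | ⟨l', _, j', _, h⟩ <;> simp_all

lemma disjoint_JR_JY (k j : ℕ) (hj : k ≤ j) : Disjoint (JR k) (JY k j) := by
  rw [Finset.disjoint_left]
  intro a ha ha'
  rw [mem_JR] at ha; rw [mem_JY] at ha'
  rcases ha' with rfl | ⟨l, _, rfl⟩ <;>
    rcases ha with ⟨j', hj', h⟩ | ⟨l', _, h⟩ | ⟨l', _, j', hj', h⟩ <;>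
      simp_all <;> omega

lemma disjoint_JX_JX {k i i' : ℕ} (h : i ≠ i') : Disjoint (JX k i) (JX k i') := by
  rw [Finset.disjoint_left]
  intro a ha ha'
  rw [mem_JX] at ha ha'
  rcases ha with rfl | ⟨l, _, rfl⟩ <;> rcases ha' with h' | ⟨l', _, h'⟩ <;> simp_all

lemma disjoint_JY_JY {k j j' : ℕ} (h : j ≠ j') : Disjoint (JY k j) (JY k j') := by
  rw [Finset.disjoint_left]
  intro a ha ha'
  rw [mem_JY] at ha ha'
  rcases ha with rfl | ⟨l, _, rfl⟩ <;> rcases ha' with h' | ⟨l', _, h'⟩ <;> simp_all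

lemma disjoint_JX_JY (k i j : ℕ) : Disjoint (JX k i) (JY k j) := by
  rw [Finset.disjoint_left]
  intro a ha ha'
  rw [mem_JX] at ha; rw [mem_JY] at ha'
  rcases ha with rfl | ⟨l, _, rfl⟩ <;> rcases ha' with h' | ⟨l', _, h'⟩ <;> simp_all

section Blocks
variable {Ω ι : Type*} {mΩ : MeasurableSpace Ω} {P : Measure Ω}
  {γ : ι → Type*} {mγ : ∀ i, MeasurableSpace (γ i)} {f : ∀ i, Ω → γ i}

lemma measurable_sup_of_mem {J : Finset ι} {i0 : ι} (h : i0 ∈ J) :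
    Measurable[⨆ i ∈ J, MeasurableSpace.comap (f i) (mγ i)] (f i0) :=
  (comap_measurable (f i0)).mono
    (le_iSup₂ (f := fun i (_ : i ∈ J) => MeasurableSpace.comap (f i) (mγ i)) i0 h) le_rfl

lemma sup_mono_blocks {J J' : Finset ι} (h : J ⊆ J') :
    (⨆ i ∈ J, MeasurableSpace.comap (f i) (mγ i))
      ≤ ⨆ i ∈ J', MeasurableSpace.comap (f i) (mγ i) :=
  biSup_mono h

end Blocks

section NoInst
variable {Ω : Type*}

lemma pair_vec_measurable {γ : Type*} [MeasurableSpace γ] (m0 : MeasurableSpace Ω) (k : ℕ)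
    (f : Ω → γ) (g : Fin k → Ω → γ) (hf : Measurable[m0] f)
    (hg : ∀ l, Measurable[m0] (g l)) :
    Measurable[m0] (fun ω => (f ω, fun l : Fin k => g l ω)) :=
  hf.prodMk (measurable_pi_lambda _ hg)

lemma vec_measurable {ι' δ : Type*} [MeasurableSpace δ] (m0 : MeasurableSpace Ω)
    (g : ι' → Ω → δ) (hg : ∀ a, Measurable[m0] (g a)) :
    Measurable[m0] (fun ω a => g a ω) :=
  measurable_pi_lambda _ hg

end NoInst

section Blocks2
variable {Ω ι : Type*} {mΩ : MeasurableSpace Ω} {P : Measure Ω}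
  {γ : ι → Type*} {mγ : ∀ i, MeasurableSpace (γ i)} {f : ∀ i, Ω → γ i}

/-- Independence of two functions measurable w.r.t. disjoint blocks. -/
lemma indepFun_of_blocks [IsProbabilityMeasure P]
    (hf : iIndepFun (m := mγ) f P) (hmf : ∀ i, Measurable (f i))
    {J1 J2 : Finset ι} (hd : Disjoint J1 J2)
    {δ1 δ2 : Type*} [MeasurableSpace δ1] [MeasurableSpace δ2] {h1 : Ω → δ1} {h2 : Ω → δ2}
    (hm1 : Measurable[⨆ i ∈ J1, MeasurableSpace.comap (f i) (mγ i)] h1)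
    (hm2 : Measurable[⨆ i ∈ J2, MeasurableSpace.comap (f i) (mγ i)] h2) :
    IndepFun h1 h2 P := by
  have hpw : Pairwise (Function.onFun Disjoint (fun b : Bool => cond b J1 J2)) := by
    rintro ⟨⟩ ⟨⟩ hne
    · simp at hne
    · exact hd.symm
    · exact hd
    · simp at hne
  have hsup := iIndep_sup_blocks hf hmf (fun b : Bool => cond b J1 J2) hpw
  have hind := hsup.indep (show (true : Bool) ≠ false by decide)
  rw [Indep_iff] at hind
  rw [indepFun_iff_measure_inter_preimage_eq_mul]
  intro s t hs ht
  exact hind _ _ (hm1 hs) (hm2 ht)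

end Blocks2
end Helpers
namespace Helpers

noncomputable local instance instDecEqAlgIdx : DecidableEq AlgIdx := Classical.decEq _

theorem aux_statement
    {Ω : Type*} [MeasurableSpace Ω] (P : Measure Ω) [IsProbabilityMeasure P]
    (d m : ℕ) (η σ : ℝ)
    (μ₀ : Measure (EucSp d)) (hμ₀ : IsProbabilityMeasure μ₀)
    (G : EucSp d → EucSp d → EucSp m → EucSp d)
    (hGmeas : Measurable fun p : EucSp d × EucSp d × EucSp m => G p.1 p.2.1 p.2.2)
    (X0 Y0 : ℕ → Ω → EucSp d) (Ξ : ℕ → Ω → EucSp m) (Z W : ℕ → ℕ → Ω → EucSp d)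
    (hmX0 : ∀ i, Measurable (X0 i)) (hmY0 : ∀ j, Measurable (Y0 j))
    (hmΞ : ∀ k, Measurable (Ξ k)) (hmZ : ∀ k i, Measurable (Z k i))
    (hmW : ∀ k j, Measurable (W k j))
    (hlX0 : ∀ i, P.map (X0 i) = μ₀) (hlY0 : ∀ j, P.map (Y0 j) = μ₀)
    (hlZ : ∀ k i, P.map (Z k i) = stdGaussianE d 1)
    (hlW : ∀ k j, P.map (W k j) = stdGaussianE d 1)
    (hindep : iIndepFun (m := algMS d m) (algFam X0 Y0 Ξ Z W) P)
    (k : ℕ) {ι' : Type*} [Fintype ι'] (sel : ι' → ℕ ⊕ ℕ)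
    (hinj : Function.Injective sel)
    (hsel : ∀ a j, sel a = Sum.inr j → k ≤ j) :
    ∀ᵐ ω ∂P,
      condDistrib (fun ω (a : ι') => Sum.elim (fun i => Xalg η σ G X0 Y0 Ξ Z W k i ω)
          (fun j => Yalg η σ G Y0 Ξ W k j ω) (sel a)) (Rvar η σ G Y0 Ξ W k) P
          (Rvar η σ G Y0 Ξ W k ω)
        = Measure.pi (fun _ : ι' => condDistrib (Xalg η σ G X0 Y0 Ξ Z W k 0)
            (Rvar η σ G Y0 Ξ W k) P (Rvar η σ G Y0 Ξ W k ω)) := by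
  classical
  haveI := hμ₀
  haveI : IsProbabilityMeasure (stdGaussianE d 1) :=
    Measure.isProbabilityMeasure_map (MeasurableEquiv.measurable _).aemeasurable
  have hmfam : ∀ i, @Measurable Ω (algType d m i) inferInstance (algMS d m i)
      (algFam X0 Y0 Ξ Z W i) := by
    intro i
    cases i with
    | x0 i => exact hmX0 i
    | y0 j => exact hmY0 j
    | xi l => exact hmΞ l
    | z l i => exact hmZ l i
    | w l j => exact hmW l j
  have msup : ∀ {J : Finset AlgIdx} {i0 : AlgIdx}, i0 ∈ J →
      @Measurable Ω (algType d m i0)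
        (⨆ i ∈ J, MeasurableSpace.comap (algFam X0 Y0 Ξ Z W i) (algMS d m i))
        (algMS d m i0) (algFam X0 Y0 Ξ Z W i0) :=
    fun h => measurable_sup_of_mem (mγ := algMS d m) (f := algFam X0 Y0 Ξ Z W) h
  -- the conditioning variable
  have hR : Measurable (Rvar η σ G Y0 Ξ W k) :=
    Rvar_measurable_of η σ G hGmeas _ k (fun j _ => hmY0 j) (fun l _ => hmΞ l)
      (fun l j _ _ => hmW l j)
  have hRblock : Measurable[⨆ i ∈ JR k,
      MeasurableSpace.comap (algFam X0 Y0 Ξ Z W i) (algMS d m i)] (Rvar η σ G Y0 Ξ W k) := by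
    refine Rvar_measurable_of η σ G hGmeas _ k (fun j hj => ?_) (fun l hl => ?_)
      (fun l j hlj hj => ?_)
    · exact msup (mem_JR.mpr (Or.inl ⟨j, hj, rfl⟩))
    · exact msup (mem_JR.mpr (Or.inr (Or.inl ⟨l, hl, rfl⟩)))
    · exact msup (mem_JR.mpr (Or.inr (Or.inr ⟨l, lt_trans hlj hj, j, hj, rfl⟩)))
  -- seeds
  set seedX : ℕ → Ω → EucSp d × (Fin k → EucSp d) :=
    fun i ω => (X0 i ω, fun l : Fin k => Z l i ω) with hseedXdef
  set seedY : ℕ → Ω → EucSp d × (Fin k → EucSp d) :=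
    fun j ω => (Y0 j ω, fun l : Fin k => W l j ω) with hseedYdef
  set seed : ι' → Ω → EucSp d × (Fin k → EucSp d) :=
    fun a => Sum.elim seedX seedY (sel a) with hseeddef
  set Jseed : ι' → Finset AlgIdx := fun a => Sum.elim (JX k) (JY k) (sel a) with hJseeddef
  have hseedXblock : ∀ i, Measurable[⨆ i' ∈ JX k i,
      MeasurableSpace.comap (algFam X0 Y0 Ξ Z W i') (algMS d m i')] (seedX i) := fun i =>
    pair_vec_measurable _ k (X0 i) (fun l => Z l i)
      (msup (i0 := AlgIdx.x0 i) (mem_JX.mpr (Or.inl rfl)))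
      (fun l => msup (i0 := AlgIdx.z (↑l) i) (mem_JX.mpr (Or.inr ⟨↑l, l.2, rfl⟩)))
  have hseedYblock : ∀ j, Measurable[⨆ i' ∈ JY k j,
      MeasurableSpace.comap (algFam X0 Y0 Ξ Z W i') (algMS d m i')] (seedY j) := fun j =>
    pair_vec_measurable _ k (Y0 j) (fun l => W l j)
      (msup (i0 := AlgIdx.y0 j) (mem_JY.mpr (Or.inl rfl)))
      (fun l => msup (i0 := AlgIdx.w (↑l) j) (mem_JY.mpr (Or.inr ⟨↑l, l.2, rfl⟩)))
  have hseedblock : ∀ a, Measurable[⨆ i' ∈ Jseed a,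
      MeasurableSpace.comap (algFam X0 Y0 Ξ Z W i') (algMS d m i')] (seed a) := by
    intro a
    rcases h : sel a with i | j
    · simp only [hseeddef, hJseeddef, h, Sum.elim_inl]
      rw [show Jseed a = JX k i by simp only [hJseeddef, h, Sum.elim_inl]]
      exact hseedXblock i
    · simp only [hseeddef, hJseeddef, h, Sum.elim_inr]
      rw [show Jseed a = JY k j by simp only [hJseeddef, h, Sum.elim_inr]]
      exact hseedYblock j
  have hseedmeas : ∀ a, Measurable (seed a) := by
    intro a
    rcases h : sel a with i | j
    · simp only [hseeddef, hseedXdef, h, Sum.elim_inl]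
      exact (hmX0 i).prodMk (measurable_pi_lambda _ fun l => hmZ l i)
    · simp only [hseeddef, hseedYdef, h, Sum.elim_inr]
      exact (hmY0 j).prodMk (measurable_pi_lambda _ fun l => hmW l j)
  have hdisjseed : Pairwise (Function.onFun Disjoint Jseed) := by
    intro a b hne
    have hab : sel a ≠ sel b := fun hc => hne (hinj hc)
    rcases ha : sel a with i | j <;> rcases hb : sel b with i' | j' <;>
      simp only [Function.onFun, hJseeddef, ha, hb, Sum.elim_inl, Sum.elim_inr]
    · refine disjoint_JX_JX fun hii => hab ?_
      rw [ha, hb, hii]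
    · exact disjoint_JX_JY k i j'
    · exact (disjoint_JX_JY k i' j).symm
    · refine disjoint_JY_JY fun hjj => hab ?_
      rw [ha, hb, hjj]
  have hseedindep : iIndepFun seed P :=
    iIndepFun_blocks hindep hmfam Jseed hdisjseed _ seed hseedblock
  -- laws of seeds
  have hzlaw : ∀ i, P.map (fun ω (l : Fin k) => Z l i ω)
      = Measure.pi (fun _ : Fin k => stdGaussianE d 1) := by
    intro i
    have hz : iIndepFun (fun l : Fin k => Z l i) P := by
      refine iIndepFun_blocks hindep hmfam (fun l : Fin k => {AlgIdx.z l i}) ?_ _ _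
        (fun l => msup (i0 := AlgIdx.z (↑l) i) (Finset.mem_singleton_self _))
      intro l l' hne
      simp only [Function.onFun, Finset.disjoint_singleton]
      intro h
      injection h with h1 _
      exact hne (Fin.ext h1)
    have h := map_fun_pi (P := P) (f := fun l : Fin k => Z (↑l) i)
      (fun l => hmZ (↑l) i) hz
    calc P.map (fun ω (l : Fin k) => Z (↑l) i ω)
        = Measure.pi (fun l : Fin k => P.map (Z (↑l) i)) := h
      _ = Measure.pi (fun _ : Fin k => stdGaussianE d 1) :=
        congrArg _ (funext fun l => hlZ (↑l) i)
  have hwlaw : ∀ j, P.map (fun ω (l : Fin k) => W l j ω)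
      = Measure.pi (fun _ : Fin k => stdGaussianE d 1) := by
    intro j
    have hw : iIndepFun (fun l : Fin k => W l j) P := by
      refine iIndepFun_blocks hindep hmfam (fun l : Fin k => {AlgIdx.w l j}) ?_ _ _
        (fun l => msup (i0 := AlgIdx.w (↑l) j) (Finset.mem_singleton_self _))
      intro l l' hne
      simp only [Function.onFun, Finset.disjoint_singleton]
      intro h
      injection h with h1 _
      exact hne (Fin.ext h1)
    have h := map_fun_pi (P := P) (f := fun l : Fin k => W (↑l) j)
      (fun l => hmW (↑l) j) hw
    calc P.map (fun ω (l : Fin k) => W (↑l) j ω)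
        = Measure.pi (fun l : Fin k => P.map (W (↑l) j)) := h
      _ = Measure.pi (fun _ : Fin k => stdGaussianE d 1) :=
        congrArg _ (funext fun l => hlW (↑l) j)
  set μS : Measure (EucSp d × (Fin k → EucSp d)) :=
    μ₀.prod (Measure.pi fun _ : Fin k => stdGaussianE d 1) with hμSdef
  haveI : IsProbabilityMeasure μS := by rw [hμSdef]; infer_instance
  have hlawX : ∀ i, P.map (seedX i) = μS := by
    intro i
    have hd : Disjoint ({AlgIdx.x0 i} : Finset AlgIdx)
        ((Finset.range k).image fun l => AlgIdx.z l i) := by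
      simp only [Finset.disjoint_left, Finset.mem_singleton, Finset.mem_image, Finset.mem_range]
      rintro a rfl ⟨l, _, h⟩
      simp at h
    have hi : IndepFun (X0 i) (fun ω (l : Fin k) => Z (↑l) i ω) P := by
      refine indepFun_of_blocks hindep hmfam hd
        (msup (i0 := AlgIdx.x0 i) (Finset.mem_singleton_self _))
        (vec_measurable _ (fun l : Fin k => Z (↑l) i) (fun l =>
          msup (i0 := AlgIdx.z (↑l) i)
            (Finset.mem_image.mpr ⟨↑l, Finset.mem_range.mpr l.2, rfl⟩)))
    have h2 := (indepFun_iff_map_prod_eq_prod_map_map (hmX0 i).aemeasurable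
      (measurable_pi_lambda _ fun l : Fin k => hmZ (↑l) i).aemeasurable).mp hi
    calc P.map (seedX i)
        = (P.map (X0 i)).prod (P.map fun ω (l : Fin k) => Z (↑l) i ω) := h2
      _ = μS := by rw [hlX0 i, hzlaw i]
  have hlawY : ∀ j, P.map (seedY j) = μS := by
    intro j
    have hd : Disjoint ({AlgIdx.y0 j} : Finset AlgIdx)
        ((Finset.range k).image fun l => AlgIdx.w l j) := by
      simp only [Finset.disjoint_left, Finset.mem_singleton, Finset.mem_image, Finset.mem_range]
      rintro a rfl ⟨l, _, h⟩
      simp at h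
    have hi : IndepFun (Y0 j) (fun ω (l : Fin k) => W (↑l) j ω) P := by
      refine indepFun_of_blocks hindep hmfam hd
        (msup (i0 := AlgIdx.y0 j) (Finset.mem_singleton_self _))
        (vec_measurable _ (fun l : Fin k => W (↑l) j) (fun l =>
          msup (i0 := AlgIdx.w (↑l) j)
            (Finset.mem_image.mpr ⟨↑l, Finset.mem_range.mpr l.2, rfl⟩)))
    have h2 := (indepFun_iff_map_prod_eq_prod_map_map (hmY0 j).aemeasurable
      (measurable_pi_lambda _ fun l : Fin k => hmW (↑l) j).aemeasurable).mp hi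
    calc P.map (seedY j)
        = (P.map (Y0 j)).prod (P.map fun ω (l : Fin k) => W (↑l) j ω) := h2
      _ = μS := by rw [hlY0 j, hwlaw j]
  have hlawseed : ∀ a, P.map (seed a) = μS := by
    intro a
    rcases h : sel a with i | j
    · simp only [hseeddef, h, Sum.elim_inl]; exact hlawX i
    · simp only [hseeddef, h, Sum.elim_inr]; exact hlawY j
  -- joint laws
  have hseedvecm : Measurable (fun ω (a : ι') => seed a ω) := measurable_pi_lambda _ hseedmeas
  have hmapseedvec : P.map (fun ω (a : ι') => seed a ω) = Measure.pi (fun _ : ι' => μS) := by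
    have h := map_fun_pi (P := P) (f := seed) hseedmeas hseedindep
    calc P.map (fun ω (a : ι') => seed a ω)
        = Measure.pi (fun a : ι' => P.map (seed a)) := h
      _ = Measure.pi (fun _ : ι' => μS) := congrArg _ (funext hlawseed)
  have hdisjR : Disjoint (JR k) (Finset.univ.biUnion Jseed) := by
    rw [Finset.disjoint_biUnion_right]
    intro a _
    rcases h : sel a with i | j
    · simp only [hJseeddef, h, Sum.elim_inl]
      exact disjoint_JR_JX k i
    · simp only [hJseeddef, h, Sum.elim_inr]
      exact disjoint_JR_JY k j (hsel a j h)
  have hRseedIndep : IndepFun (Rvar η σ G Y0 Ξ W k) (fun ω (a : ι') => seed a ω) P := by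
    refine indepFun_of_blocks hindep hmfam hdisjR hRblock
      (vec_measurable _ seed (fun a => Measurable.mono (hseedblock a)
        (sup_mono_blocks (Finset.subset_biUnion_of_mem Jseed (Finset.mem_univ a))) le_rfl))
  have hjoint : P.map (fun ω => (Rvar η σ G Y0 Ξ W k ω, fun a : ι' => seed a ω))
      = (P.map (Rvar η σ G Y0 Ξ W k)).prod (Measure.pi fun _ : ι' => μS) := by
    rw [← hmapseedvec]
    exact (indepFun_iff_map_prod_eq_prod_map_map hR.aemeasurable
      hseedvecm.aemeasurable).mp hRseedIndep
  -- single seed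
  have hseed0meas : Measurable (seedX 0) :=
    (hmX0 0).prodMk (measurable_pi_lambda _ fun l => hmZ l 0)
  have hRseed0Indep : IndepFun (Rvar η σ G Y0 Ξ W k) (seedX 0) P :=
    indepFun_of_blocks hindep hmfam (disjoint_JR_JX k 0) hRblock (hseedXblock 0)
  have hjoint0 : P.map (fun ω => (Rvar η σ G Y0 Ξ W k ω, seedX 0 ω))
      = (P.map (Rvar η σ G Y0 Ξ W k)).prod μS := by
    rw [← hlawX 0]
    exact (indepFun_iff_map_prod_eq_prod_map_map hR.aemeasurable
      hseed0meas.aemeasurable).mp hRseed0Indep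
  -- apply the abstract lemma
  have key := condDistrib_pi_of_indep P (Rvar η σ G Y0 Ξ W k) hR seed hseedmeas (seedX 0)
    hseed0meas μS (Fk η σ G k) (Fk_measurable η σ G hGmeas k) hjoint hjoint0
  have hfun1 : (fun ω (a : ι') => Sum.elim (fun i => Xalg η σ G X0 Y0 Ξ Z W k i ω)
      (fun j => Yalg η σ G Y0 Ξ W k j ω) (sel a))
      = fun ω a => Fk η σ G k (Rvar η σ G Y0 Ξ W k ω) (seed a ω) := by
    funext ω a
    rcases h : sel a with i | j
    · simp only [hseeddef, h, Sum.elim_inl]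
      exact Xalg_rep η σ G k i ω
    · simp only [hseeddef, h, Sum.elim_inr]
      exact Yalg_rep η σ G k j (hsel a j h) ω
  have hfun0 : Xalg η σ G X0 Y0 Ξ Z W k 0
      = fun ω => Fk η σ G k (Rvar η σ G Y0 Ξ W k ω) (seedX 0 ω) :=
    funext fun ω => Xalg_rep η σ G k 0 ω
  rw [hfun1, hfun0]
  exact key

end Helpers

/-- In Algorithm 1 (virtual particle stochastic approximation), for every
`0 ≤ k ≤ T`, conditioned on `R_{k-1}`, the random vectors
`X_k^{(1)},…,X_k^{(n)}, Y_k^{(k)},…,Y_k^{(T)}` are i.i.d.; in particular, conditioned on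
`R_{T-1}`, the outputs `X_T^{(1)},…,X_T^{(n)}` are i.i.d. with common conditional law
`μ_T | R_{T-1}` (the conditional law of `X_T^{(1)}`). -/
theorem statement0
    {Ω : Type*} [MeasurableSpace Ω] (P : Measure Ω) [IsProbabilityMeasure P]
    (d m n T : ℕ) (η σ : ℝ) (hη : 0 < η) (hσ : 0 < σ)
    (μ₀ : Measure (EucSp d)) (hμ₀ : MemP2 μ₀)
    (ν : Measure (EucSp m)) (hν : IsProbabilityMeasure ν)
    (G : EucSp d → EucSp d → EucSp m → EucSp d)
    (hGmeas : Measurable fun p : EucSp d × EucSp d × EucSp m => G p.1 p.2.1 p.2.2)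
    (X0 Y0 : ℕ → Ω → EucSp d) (Ξ : ℕ → Ω → EucSp m) (Z W : ℕ → ℕ → Ω → EucSp d)
    (hmX0 : ∀ i, Measurable (X0 i)) (hmY0 : ∀ j, Measurable (Y0 j))
    (hmΞ : ∀ k, Measurable (Ξ k)) (hmZ : ∀ k i, Measurable (Z k i))
    (hmW : ∀ k j, Measurable (W k j))
    (hlX0 : ∀ i, P.map (X0 i) = μ₀) (hlY0 : ∀ j, P.map (Y0 j) = μ₀)
    (hlΞ : ∀ k, P.map (Ξ k) = ν)
    (hlZ : ∀ k i, P.map (Z k i) = stdGaussianE d 1)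
    (hlW : ∀ k j, P.map (W k j) = stdGaussianE d 1)
    (hindep : iIndepFun (m := algMS d m) (algFam X0 Y0 Ξ Z W) P) :
    (∀ k ≤ T,
      ∀ᵐ ω ∂P,
        condDistrib
          (fun ω => Sum.elim (fun i : Fin n => Xalg η σ G X0 Y0 Ξ Z W k i ω)
            (fun j : Fin (T + 1 - k) => Yalg η σ G Y0 Ξ W k (k + (j : ℕ)) ω))
          (Rvar η σ G Y0 Ξ W k) P (Rvar η σ G Y0 Ξ W k ω)
          = Measure.pi (fun _ : Fin n ⊕ Fin (T + 1 - k) =>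
              condDistrib (Xalg η σ G X0 Y0 Ξ Z W k 0) (Rvar η σ G Y0 Ξ W k) P
                (Rvar η σ G Y0 Ξ W k ω)))
    ∧
    (∀ᵐ ω ∂P,
      condDistrib (fun ω => fun i : Fin n => Xalg η σ G X0 Y0 Ξ Z W T i ω)
        (Rvar η σ G Y0 Ξ W T) P (Rvar η σ G Y0 Ξ W T ω)
        = Measure.pi (fun _ : Fin n =>
            condDistrib (Xalg η σ G X0 Y0 Ξ Z W T 0) (Rvar η σ G Y0 Ξ W T) P
              (Rvar η σ G Y0 Ξ W T ω))) := by
  constructor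
  · intro k hk
    set sel : Fin n ⊕ Fin (T + 1 - k) → ℕ ⊕ ℕ :=
      Sum.elim (fun i : Fin n => (Sum.inl (i : ℕ) : ℕ ⊕ ℕ))
        (fun j : Fin (T + 1 - k) => Sum.inr (k + (j : ℕ))) with hseldef
    have hinj : Function.Injective sel := by
      rintro (i | j) (i' | j') h
      · simp only [hseldef, Sum.elim_inl, Sum.inl.injEq] at h
        exact congrArg Sum.inl (Fin.ext h)
      · simp [hseldef] at h
      · simp [hseldef] at h
      · simp only [hseldef, Sum.elim_inr, Sum.inr.injEq] at h
        exact congrArg Sum.inr (Fin.ext (by omega))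
    have hsel : ∀ a j', sel a = Sum.inr j' → k ≤ j' := by
      rintro (i | j) j' h
      · simp [hseldef] at h
      · simp only [hseldef, Sum.elim_inr, Sum.inr.injEq] at h
        omega
    have h := Helpers.aux_statement P d m η σ μ₀ hμ₀.1 G hGmeas X0 Y0 Ξ Z W
      hmX0 hmY0 hmΞ hmZ hmW hlX0 hlY0 hlZ hlW hindep k sel hinj hsel
    have hfe : (fun ω => Sum.elim (fun i : Fin n => Xalg η σ G X0 Y0 Ξ Z W k i ω)
        (fun j : Fin (T + 1 - k) => Yalg η σ G Y0 Ξ W k (k + (j : ℕ)) ω))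
        = fun ω (a : Fin n ⊕ Fin (T + 1 - k)) =>
            Sum.elim (fun i => Xalg η σ G X0 Y0 Ξ Z W k i ω)
              (fun j => Yalg η σ G Y0 Ξ W k j ω) (sel a) :=
      funext fun ω => funext fun a => by cases a <;> rfl
    rw [hfe]
    exact h
  · set sel : Fin n → ℕ ⊕ ℕ := fun i => (Sum.inl (i : ℕ) : ℕ ⊕ ℕ) with hseldef
    have hinj : Function.Injective sel := by
      intro i i' h
      simp only [hseldef, Sum.inl.injEq] at h
      exact Fin.ext h
    have hsel : ∀ a j', sel a = Sum.inr j' → T ≤ j' := by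
      intro a j' h
      simp [hseldef] at h
    have h := Helpers.aux_statement P d m η σ μ₀ hμ₀.1 G hGmeas X0 Y0 Ξ Z W
      hmX0 hmY0 hmΞ hmZ hmW hlX0 hlY0 hlZ hlW hindep T sel hinj hsel
    have hfe : (fun ω => fun i : Fin n => Xalg η σ G X0 Y0 Ξ Z W T i ω)
        = fun ω (a : Fin n) =>
            Sum.elim (fun i => Xalg η σ G X0 Y0 Ξ Z W T i ω)
              (fun j => Yalg η σ G Y0 Ξ W T j ω) (sel a) :=
      funext fun ω => funext fun a => rfl
    rw [hfe]
    exact h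

end
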